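/- Define $f(t) = (t + \sqrt{t^2-4})/2$ for $t \geq 2$. Let $N \geq 3$, and let $Q$ be a positive definite $N\times N$ matrix with inversion-symmetric spectrum, $Q \neq I$, and $d_1 := \mathrm{Tr}(Q) \geq 2$. Then $f(d_1) < f(N)\|Q\|$. -/

import Mathlib

open scoped Matrix.Norms.L2Operator ComplexOrder

noncomputable instance matCStarAux (N : ℕ) : CStarAlgebra (Matrix (Fin N) (Fin N) ℂ) :=
  Matrix.instCStarAlgebra

set_option maxHeartbeats 1000000 in
/-- With `f(t) = (t + √(t²-4))/2`, if `Q` is positive definite `N×N` (`N ≥ 3`) with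
inversion-symmetric spectrum, `Q ≠ I` and `d₁ = Tr Q ≥ 2`, then `f(d₁) < f(N) ‖Q‖`. -/
theorem stmt3 (f : ℝ → ℝ) (hf : ∀ t : ℝ, 2 ≤ t → f t = (t + Real.sqrt (t ^ 2 - 4)) / 2)
    (N : ℕ) (hN : 3 ≤ N) (Q : Matrix (Fin N) (Fin N) ℂ) (hQ : Q.PosDef)
    (hsym : ∀ l : ℂ, l ∈ spectrum ℂ Q → l⁻¹ ∈ spectrum ℂ Q)
    (hQne : Q ≠ 1) (hd : 2 ≤ Q.trace.re) :
    f Q.trace.re < f N * ‖Q‖ := by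
  haveI : Nonempty (Fin N) := ⟨⟨0, by omega⟩⟩
  haveI : Nontrivial (Matrix (Fin N) (Fin N) ℂ) := by
    refine ⟨0, 1, fun h => ?_⟩
    have := congrFun (congrFun h (Classical.arbitrary (Fin N))) (Classical.arbitrary (Fin N))
    simp [Matrix.one_apply] at this
  have hH : Q.IsHermitian := hQ.1
  have hsa : IsSelfAdjoint Q := hH
  set ev := hH.eigenvalues with hevdef
  have hpos : ∀ i, 0 < ev i := fun i => hQ.eigenvalues_pos i
  have hspecR : spectrum ℝ Q = Set.range ev := hH.spectrum_real_eq_range_eigenvalues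
  have hmemC : ∀ i, (ev i : ℂ) ∈ spectrum ℂ Q := fun i => by
    have h1 : ev i ∈ spectrum ℝ Q := hspecR ▸ Set.mem_range_self i
    simpa using spectrum.algebraMap_mem ℂ h1
  have hmemC' : ∀ z ∈ spectrum ℂ Q, ∃ i, z = (ev i : ℂ) := by
    intro z hz
    have hzre : z = z.re := hsa.mem_spectrum_eq_re hz
    have h1 : algebraMap ℝ ℂ z.re ∈ spectrum ℂ Q := by
      simpa [← hzre] using hz
    have h2 : z.re ∈ spectrum ℝ Q := spectrum.of_algebraMap_mem ℂ h1
    rw [hspecR] at h2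
    obtain ⟨i, hi⟩ := h2
    exact ⟨i, by rw [hzre, hi]⟩
  have hub : ∀ i, ev i ≤ ‖Q‖ := fun i => by
    have h := spectrum.norm_le_norm_of_mem (hmemC i)
    rwa [Complex.norm_real, Real.norm_eq_abs, abs_of_pos (hpos i)] at h
  -- the norm is attained at an eigenvalue
  obtain ⟨z, hz, hzr⟩ := spectrum.exists_nnnorm_eq_spectralRadius Q
  rw [hsa.spectralRadius_eq_nnnorm] at hzr
  have hzn : ‖z‖ = ‖Q‖ := by
    have h' : ‖z‖₊ = ‖Q‖₊ := by exact_mod_cast hzr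
    rw [← coe_nnnorm, ← coe_nnnorm, h']
  obtain ⟨i₀, hi₀⟩ := hmemC' z hz
  have hQnorm : ‖Q‖ = ev i₀ := by
    rw [← hzn, hi₀, Complex.norm_real, Real.norm_eq_abs, abs_of_pos (hpos i₀)]
  set lam := ‖Q‖ with hlamdef
  have hlam_pos : 0 < lam := hQnorm ▸ hpos i₀
  -- inverses of eigenvalues are eigenvalues
  have hinv' : ∀ i, ∃ k, ev k = (ev i)⁻¹ := fun i => by
    obtain ⟨k, hk⟩ := hmemC' _ (hsym _ (hmemC i))
    refine ⟨k, ?_⟩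
    have : ((ev i)⁻¹ : ℂ) = (ev k : ℂ) := by push_cast; exact hk
    exact_mod_cast this.symm
  -- some eigenvalue differs from 1
  have hne : ∃ i, ev i ≠ 1 := by
    by_contra h
    push_neg at h
    apply hQne
    have hdiag : Matrix.diagonal (RCLike.ofReal ∘ ev) = (1 : Matrix (Fin N) (Fin N) ℂ) := by
      rw [show (RCLike.ofReal ∘ ev : Fin N → ℂ) = fun _ => 1 by funext i; simp [h i],
        Matrix.diagonal_one]
    have hst := hH.spectral_theorem
    rw [hdiag, Unitary.conjStarAlgAut_apply, mul_one] at hst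
    rw [hst]
    exact (Matrix.mem_unitaryGroup_iff).mp (hH.eigenvectorUnitary).2
  obtain ⟨j, hj⟩ := hne
  have hlam1 : 1 < lam := by
    rcases lt_or_gt_of_ne hj with h | h
    · obtain ⟨m, hm⟩ := hinv' j
      have h1 : ev m ≤ lam := hub m
      have h2 : ev j * ev m = 1 := by rw [hm]; exact mul_inv_cancel₀ (hpos j).ne'
      nlinarith [hpos j, hpos m]
    · exact lt_of_lt_of_le h (hub j)
  -- trace is sum of eigenvalues
  have htr : Q.trace = ∑ i, (ev i : ℂ) := by
    conv_lhs => rw [hH.spectral_theorem, Unitary.conjStarAlgAut_apply]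
    rw [Matrix.trace_mul_cycle,
      (Matrix.mem_unitaryGroup_iff').mp (hH.eigenvectorUnitary).2, one_mul,
      Matrix.trace_diagonal]
    simp [hevdef]
  have htr_re : Q.trace.re = ∑ i, ev i := by
    rw [htr]
    push_cast
    simp
  -- the inverse of the top eigenvalue is an eigenvalue
  obtain ⟨k, hk⟩ := hinv' i₀
  have hklam : ev k = lam⁻¹ := by rw [hk, hQnorm]
  -- sum bound
  have hsum : ∑ i, ev i ≤ ((N : ℝ) - 1) * lam + lam⁻¹ := by
    rw [← Finset.add_sum_erase _ _ (Finset.mem_univ k), hklam]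
    have hb : ∑ i ∈ Finset.univ.erase k, ev i ≤ ∑ i ∈ Finset.univ.erase k, lam :=
      Finset.sum_le_sum fun i _ => hub i
    have hcard : (Finset.univ.erase k).card = N - 1 := by
      rw [Finset.card_erase_of_mem (Finset.mem_univ k)]
      simp
    rw [Finset.sum_const, hcard] at hb
    have hNcast : ((N - 1 : ℕ) : ℝ) = (N : ℝ) - 1 := by
      have : 1 ≤ N := by omega
      push_cast [this]
      ring
    rw [nsmul_eq_mul, hNcast] at hb
    linarith
  set d1 := Q.trace.re with hd1def
  have hd1 : d1 = ∑ i, ev i := htr_re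
  have hlaminv : lam * lam⁻¹ = 1 := mul_inv_cancel₀ (ne_of_gt hlam_pos)
  have hinvlt : lam⁻¹ < 1 := by
    rw [inv_lt_one_iff₀]; right; exact hlam1
  have hNR : (3 : ℝ) ≤ (N : ℝ) := by exact_mod_cast hN
  have hdle : d1 ≤ ((N : ℝ) - 1) * lam + lam⁻¹ := hd1 ▸ hsum
  have hdN : d1 < (N : ℝ) * lam := by nlinarith
  have hdsq : d1 ^ 2 - 4 < ((N : ℝ) ^ 2 - 4) * lam ^ 2 := by
    have hu_pos : 0 < lam⁻¹ := inv_pos.mpr hlam_pos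
    have husq : lam⁻¹ ^ 2 < 1 := by nlinarith
    have e1 : d1 ^ 2 ≤ (((N : ℝ) - 1) * lam + lam⁻¹) ^ 2 := by nlinarith
    have e2 : (((N : ℝ) - 1) * lam + lam⁻¹) ^ 2
        = ((N : ℝ) - 1) ^ 2 * lam ^ 2 + 2 * ((N : ℝ) - 1) * (lam * lam⁻¹) + lam⁻¹ ^ 2 := by
      ring
    rw [hlaminv, mul_one] at e2
    rw [e2] at e1
    have hprod : 0 ≤ (2 * (N : ℝ) - 5) * (lam ^ 2 - 1) :=
      mul_nonneg (by linarith) (by nlinarith)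
    nlinarith [e1, hprod, husq]
  -- final computation
  have h2N : (2 : ℝ) ≤ (N : ℝ) := by linarith
  rw [hf _ hd, hf _ h2N]
  have hNl : (0 : ℝ) ≤ (N : ℝ) ^ 2 - 4 := by nlinarith
  have h0 : (0 : ℝ) ≤ d1 ^ 2 - 4 := by nlinarith
  have hsplit : Real.sqrt (((N : ℝ) ^ 2 - 4) * lam ^ 2)
      = Real.sqrt ((N : ℝ) ^ 2 - 4) * lam := by
    rw [Real.sqrt_mul hNl, Real.sqrt_sq hlam_pos.le]
  have hs1 : Real.sqrt (d1 ^ 2 - 4) < Real.sqrt ((N : ℝ) ^ 2 - 4) * lam := by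
    rw [← hsplit]
    exact Real.sqrt_lt_sqrt h0 hdsq
  have hsN : 0 ≤ Real.sqrt ((N : ℝ) ^ 2 - 4) := Real.sqrt_nonneg _
  nlinarith [hdN, hs1]
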